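/- Let X be a weakly normal gts with X_top locally compact Hausdorff and non-compact. Then the collection C₀ = {A ∈ Cl_X : A is topologically compact, or every B ∈ Cl_X with B ⊆ X ∖ A is topologically compact} is a Wallman base for X_top, and every filter in C₀ extends to an ultrafilter in C₀ (so the Wallman space W(X, C₀) is compact), all in ZF. -/

import Mathlib

open Set TopologicalSpace Topology

universe u

/-- A generalized topology in the sense of Delfs–Knebusch (axioms following
Piękosz, Definition 2.2.1): `Cov` is the collection of admissible open families,
and the open sets are the members of `⋃₀ Cov`. -/
structure GenTop (X : Type u) : Type u where
  Cov : Set (Set (Set X))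
  univ_open : Set.univ ∈ ⋃₀ Cov
  finite_admissible : ∀ 𝒰 : Set (Set X), 𝒰.Finite → 𝒰 ⊆ ⋃₀ Cov → 𝒰 ∈ Cov
  union_open : ∀ 𝒰 ∈ Cov, ⋃₀ 𝒰 ∈ ⋃₀ Cov
  restrict : ∀ 𝒰 ∈ Cov, ∀ V ∈ ⋃₀ Cov, (fun U => V ∩ U) '' 𝒰 ∈ Cov
  transitive : ∀ 𝒰 ∈ Cov, ∀ f : Set X → Set (Set X),
    (∀ U ∈ 𝒰, f U ∈ Cov ∧ ⋃₀ f U = U) → {V : Set X | ∃ U ∈ 𝒰, V ∈ f U} ∈ Cov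
  coarsen : ∀ 𝒰 ∈ Cov, ∀ 𝒱 ⊆ ⋃₀ Cov, (∀ U ∈ 𝒰, ∃ V ∈ 𝒱, U ⊆ V) →
    ⋃₀ 𝒱 = ⋃₀ 𝒰 → 𝒱 ∈ Cov
  regular : ∀ 𝒰 ∈ Cov, ∀ W ⊆ ⋃₀ 𝒰, (∀ U ∈ 𝒰, W ∩ U ∈ ⋃₀ Cov) → W ∈ ⋃₀ Cov

namespace GenTop

variable {X : Type u} (G : GenTop X)

/-- The open sets of a gts. -/
def Opens : Set (Set X) := ⋃₀ G.Cov

/-- The closed sets of a gts. -/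
def Closeds : Set (Set X) := {A : Set X | Aᶜ ∈ G.Opens}

/-- The topologization of a gts: the topology generated by the open sets. -/
def topol : TopologicalSpace X := TopologicalSpace.generateFrom G.Opens

/-- A gts is weakly normal if disjoint sets, each a singleton or closed,
can be separated by disjoint open sets. -/
def WeaklyNormal : Prop :=
  ∀ A₁ A₂ : Set X, ((∃ x, A₁ = {x}) ∨ A₁ ∈ G.Closeds) →
    ((∃ x, A₂ = {x}) ∨ A₂ ∈ G.Closeds) → Disjoint A₁ A₂ →
    ∃ W₁ ∈ G.Opens, ∃ W₂ ∈ G.Opens, Disjoint W₁ W₂ ∧ A₁ ⊆ W₁ ∧ A₂ ⊆ W₂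

end GenTop

/-- A closed base of a topological space. -/
def IsClosedBase {X : Type u} [TopologicalSpace X] (C : Set (Set X)) : Prop :=
  (∀ A ∈ C, IsClosed A) ∧
  ∀ A : Set X, IsClosed A → ∀ x ∉ A, ∃ B ∈ C, x ∉ B ∧ A ⊆ B

/-- A complete closed base: a closed base containing `∅` and `univ`, closed
under finite unions and finite intersections. -/
def IsCompleteClosedBase {X : Type u} [TopologicalSpace X] (C : Set (Set X)) : Prop :=
  IsClosedBase C ∧ ∅ ∈ C ∧ Set.univ ∈ C ∧
  (∀ A ∈ C, ∀ B ∈ C, A ∪ B ∈ C) ∧ (∀ A ∈ C, ∀ B ∈ C, A ∩ B ∈ C)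

/-- A Wallman base of a topological space. -/
def IsWallmanBase {X : Type u} [TopologicalSpace X] (C : Set (Set X)) : Prop :=
  IsClosedBase C ∧
  (∀ A ∈ C, ∀ B ∈ C, A ∪ B ∈ C) ∧ (∀ A ∈ C, ∀ B ∈ C, A ∩ B ∈ C) ∧
  (∀ A : Set X, ((∃ x, A = {x}) ∨ IsClosed A) → ∀ x ∉ A, ∃ B ∈ C, x ∈ B ∧ B ⊆ Aᶜ) ∧
  (∀ A₁ ∈ C, ∀ A₂ ∈ C, Disjoint A₁ A₂ →
    ∃ C₁ ∈ C, ∃ C₂ ∈ C, C₁ ∪ C₂ = Set.univ ∧ A₁ ∩ C₁ = ∅ ∧ A₂ ∩ C₂ = ∅)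

/-- A filter in the lattice `C`: a nonempty collection of nonempty members of `C`,
closed under finite intersections and upward closed within `C`. -/
def IsCFilter {X : Type u} (C : Set (Set X)) (F : Set (Set X)) : Prop :=
  F ⊆ C ∧ F.Nonempty ∧ (∀ A ∈ F, A.Nonempty) ∧
  (∀ A ∈ F, ∀ B ∈ F, A ∩ B ∈ F) ∧ (∀ A ∈ F, ∀ B ∈ C, A ⊆ B → B ∈ F)

/-- An ultrafilter in the lattice `C`: a maximal filter in `C`. -/
def IsCUltrafilter {X : Type u} (C : Set (Set X)) (F : Set (Set X)) : Prop :=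
  IsCFilter C F ∧ ∀ F' : Set (Set X), IsCFilter C F' → F ⊆ F' → F' = F

/-- The points of the Wallman space: ultrafilters in `C`. -/
def WallmanPoint {X : Type u} (C : Set (Set X)) : Type u :=
  {p : Set (Set X) // IsCUltrafilter C p}

/-- The topology of the Wallman space, with closed base `{[A] : A ∈ C}` where
`[A] = {p : A ∈ p}`. -/
def wallmanTop {X : Type u} (C : Set (Set X)) : TopologicalSpace (WallmanPoint C) :=
  TopologicalSpace.generateFrom
    {V : Set (WallmanPoint C) | ∃ A ∈ C, V = {p : WallmanPoint C | A ∈ p.1}ᶜ}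

namespace WallmanAux

open GenTop

variable {X : Type u} (G : GenTop X)

lemma opens_sUnion_finite {𝒰 : Set (Set X)} (h : 𝒰.Finite) (hs : 𝒰 ⊆ G.Opens) :
    ⋃₀ 𝒰 ∈ G.Opens :=
  G.union_open 𝒰 (G.finite_admissible 𝒰 h hs)

lemma opens_empty : ∅ ∈ G.Opens := by
  simpa using opens_sUnion_finite G finite_empty (empty_subset _)

lemma opens_univ : Set.univ ∈ G.Opens := G.univ_open

lemma opens_union {U V : Set X} (hU : U ∈ G.Opens) (hV : V ∈ G.Opens) :
    U ∪ V ∈ G.Opens := by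
  have := opens_sUnion_finite G ((Set.finite_singleton V).insert U)
    (by rintro W hW; rcases hW with rfl | hW; · exact hU
        · rw [Set.mem_singleton_iff] at hW; subst hW; exact hV)
  simpa using this

lemma opens_inter {U V : Set X} (hU : U ∈ G.Opens) (hV : V ∈ G.Opens) :
    U ∩ V ∈ G.Opens := by
  have h1 : {V} ∈ G.Cov := G.finite_admissible {V} (finite_singleton V) (by simpa [GenTop.Opens] using hV)
  have h2 := G.restrict {V} h1 U hU
  have := G.union_open _ h2
  simpa [GenTop.Opens] using this

lemma opens_sInter_finite {𝒰 : Set (Set X)} (h : 𝒰.Finite) (hs : 𝒰 ⊆ G.Opens) :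
    ⋂₀ 𝒰 ∈ G.Opens := by
  revert hs
  refine Set.Finite.induction_on (motive := fun s _ => s ⊆ G.Opens → ⋂₀ s ∈ G.Opens) _ h ?_ ?_
  · intro _; simpa using opens_univ G
  · intro a s _ _ ih hs
    rw [Set.sInter_insert]
    exact opens_inter G (hs (Set.mem_insert _ _)) (ih fun x hx => hs (Set.mem_insert_of_mem _ hx))

lemma isOpen_opens {U : Set X} (hU : U ∈ G.Opens) : @IsOpen X G.topol U :=
  TopologicalSpace.isOpen_generateFrom_of_mem hU

lemma isClosed_closeds {A : Set X} (hA : A ∈ G.Closeds) : @IsClosed X G.topol A := by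
  letI := G.topol
  rw [← isOpen_compl_iff]
  exact isOpen_opens G hA

lemma compl_opens_closeds {U : Set X} (hU : U ∈ G.Opens) : Uᶜ ∈ G.Closeds := by
  show Uᶜᶜ ∈ G.Opens; rwa [compl_compl]

lemma closeds_inter {A B : Set X} (hA : A ∈ G.Closeds) (hB : B ∈ G.Closeds) :
    A ∩ B ∈ G.Closeds := by
  show (A ∩ B)ᶜ ∈ G.Opens
  rw [Set.compl_inter]
  exact opens_union G hA hB

lemma closeds_union {A B : Set X} (hA : A ∈ G.Closeds) (hB : B ∈ G.Closeds) :
    A ∪ B ∈ G.Closeds := by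
  show (A ∪ B)ᶜ ∈ G.Opens
  rw [Set.compl_union]
  exact opens_inter G hA hB

lemma exists_basic {u : Set X} (hu : @IsOpen X G.topol u) {x : X} (hx : x ∈ u) :
    ∃ v ∈ G.Opens, x ∈ v ∧ v ⊆ u := by
  letI := G.topol
  have hb := TopologicalSpace.isTopologicalBasis_of_subbasis
    (rfl : G.topol = TopologicalSpace.generateFrom G.Opens)
  obtain ⟨b, ⟨f, ⟨hfin, hsub⟩, rfl⟩, hxb, hbu⟩ := hb.exists_subset_of_mem_open hx hu
  exact ⟨⋂₀ f, opens_sInter_finite G hfin hsub, hxb, hbu⟩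

lemma key (hlc : @LocallyCompactSpace X G.topol) {u : Set X} (hu : @IsOpen X G.topol u)
    {x : X} (hx : x ∈ u) :
    ∃ v ∈ G.Opens, ∃ K, @IsCompact X G.topol K ∧ x ∈ v ∧ v ⊆ K ∧ K ⊆ u := by
  letI := G.topol
  obtain ⟨K, hKn, hKu, hKc⟩ := local_compact_nhds (hu.mem_nhds hx)
  obtain ⟨t, htK, hto, hxt⟩ := mem_nhds_iff.mp hKn
  obtain ⟨v, hv, hxv, hvt⟩ := exists_basic G hto hxt
  exact ⟨v, hv, K, hKc, hxv, hvt.trans htK, hKu⟩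

end WallmanAux

/-- The Wallman base of the one-point compactification: closed sets that are
topologically compact or whose closed "complementary" sets are all compact. -/
def C0 {X : Type u} (G : GenTop X) : Set (Set X) :=
  {A ∈ G.Closeds | @IsCompact X G.topol A ∨
    ∀ B ∈ G.Closeds, B ⊆ Aᶜ → @IsCompact X G.topol B}


namespace WallmanAux

variable {X : Type u} (G : GenTop X)

lemma coShrink (hlc : @LocallyCompactSpace X G.topol) {A V : Set X}
    (hA : @IsCompact X G.topol A) (hV : V ∈ G.Opens) (hAV : A ⊆ V) :
    ∃ W ∈ G.Opens, A ⊆ W ∧ W ⊆ V ∧ Wᶜ ∈ C0 G := by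
  letI := G.topol
  have hVo := isOpen_opens G hV
  choose v hv K hK hxv hvK hKV using fun x : A => key G hlc hVo (hAV x.2)
  obtain ⟨t, ht⟩ := hA.elim_finite_subcover v (fun x => isOpen_opens G (hv x))
    (fun a ha => Set.mem_iUnion.2 ⟨⟨a, ha⟩, hxv _⟩)
  have hWopen : (⋃ x ∈ t, v x) ∈ G.Opens := by
    have heq : (⋃ x ∈ t, v x) = ⋃₀ (v '' (t : Set A)) := by
      rw [Set.sUnion_image]; simp
    rw [heq]
    exact opens_sUnion_finite G (t.finite_toSet.image v) (by rintro _ ⟨x, _, rfl⟩; exact hv x)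
  have hKc : @IsCompact X G.topol (⋃ x ∈ t, K x) :=
    t.finite_toSet.isCompact_biUnion (fun i _ => hK i)
  have hWK : (⋃ x ∈ t, v x) ⊆ ⋃ x ∈ t, K x := Set.iUnion₂_mono fun i _ => hvK i
  refine ⟨⋃ x ∈ t, v x, hWopen, ht, ?_, ?_⟩
  · exact Set.iUnion₂_subset fun i _ => (hvK i).trans (hKV i)
  · refine ⟨compl_opens_closeds G hWopen, Or.inr fun B hB hBW => ?_⟩
    rw [compl_compl] at hBW
    exact hKc.of_isClosed_subset (isClosed_closeds G hB) (hBW.trans hWK)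

lemma screenHalf (hlc : @LocallyCompactSpace X G.topol) {A V : Set X} (hA : A ∈ C0 G)
    (hV : V ∈ G.Opens) (hAV : A ⊆ V) :
    ∃ W ∈ G.Opens, A ⊆ W ∧ W ⊆ V ∧ Wᶜ ∈ C0 G := by
  rcases hA.2 with hc | h2
  · exact coShrink G hlc hc hV hAV
  · exact ⟨V, hV, hAV, subset_rfl, compl_opens_closeds G hV,
      Or.inl (h2 Vᶜ (compl_opens_closeds G hV) (Set.compl_subset_compl.mpr hAV))⟩

lemma c0_union {A B : Set X} (hA : A ∈ C0 G) (hB : B ∈ C0 G) : A ∪ B ∈ C0 G := by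
  letI := G.topol
  refine ⟨closeds_union G hA.1 hB.1, ?_⟩
  rcases hA.2 with hac | ha2
  · rcases hB.2 with hbc | hb2
    · exact Or.inl (hac.union hbc)
    · exact Or.inr fun C hC hCs => hb2 C hC
        (hCs.trans (by rw [Set.compl_union]; exact Set.inter_subset_right))
  · exact Or.inr fun C hC hCs => ha2 C hC
      (hCs.trans (by rw [Set.compl_union]; exact Set.inter_subset_left))

lemma c0_inter (hwn : G.WeaklyNormal) {A B : Set X} (hA : A ∈ C0 G) (hB : B ∈ C0 G) :
    A ∩ B ∈ C0 G := by
  letI := G.topol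
  have hABcl := closeds_inter G hA.1 hB.1
  refine ⟨hABcl, ?_⟩
  rcases hA.2 with hac | ha2
  · exact Or.inl (hac.of_isClosed_subset (isClosed_closeds G hABcl) Set.inter_subset_left)
  rcases hB.2 with hbc | hb2
  · exact Or.inl (hbc.of_isClosed_subset (isClosed_closeds G hABcl) Set.inter_subset_right)
  refine Or.inr fun C hC hCs => ?_
  have hdis : Disjoint A (C ∩ B) := by
    rw [Set.disjoint_left]
    rintro x hxA ⟨hxC, hxB⟩
    exact hCs hxC ⟨hxA, hxB⟩
  obtain ⟨W₁, hW₁, W₂, hW₂, hd, hAW, hCBW⟩ := hwn A (C ∩ B) (Or.inr hA.1)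
    (Or.inr (closeds_inter G hC hB.1)) hdis
  have hc1 : IsCompact (C ∩ W₁ᶜ) := ha2 _ (closeds_inter G hC (compl_opens_closeds G hW₁))
    (fun x hx hxA => hx.2 (hAW hxA))
  have hc2 : IsCompact (C ∩ W₂ᶜ) := hb2 _ (closeds_inter G hC (compl_opens_closeds G hW₂))
    (fun x hx hxB => hx.2 (hCBW ⟨hx.1, hxB⟩))
  have hCeq : C = (C ∩ W₁ᶜ) ∪ (C ∩ W₂ᶜ) := by
    ext x; constructor
    · intro hx
      by_cases h1 : x ∈ W₁
      · exact Or.inr ⟨hx, fun h2 => Set.disjoint_left.mp hd h1 h2⟩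
      · exact Or.inl ⟨hx, h1⟩
    · rintro (⟨h, _⟩ | ⟨h, _⟩) <;> exact h
  rw [hCeq]; exact hc1.union hc2

lemma univ_mem_C0 : Set.univ ∈ C0 G := by
  letI := G.topol
  refine ⟨?_, Or.inr fun B _ hBs => ?_⟩
  · show Set.univᶜ ∈ G.Opens; rw [Set.compl_univ]; exact opens_empty G
  · have : B = ∅ := by simpa [Set.compl_univ, Set.subset_empty_iff] using hBs
    rw [this]; exact isCompact_empty

lemma extend_filter {Y : Type u} {C F : Set (Set Y)} (hF : IsCFilter C F) :
    ∃ M, IsCUltrafilter C M ∧ F ⊆ M := by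
  have hchainub : ∀ c ⊆ {F' | IsCFilter C F' ∧ F ⊆ F'}, IsChain (· ⊆ ·) c → c.Nonempty →
      ∃ ub ∈ {F' | IsCFilter C F' ∧ F ⊆ F'}, ∀ s ∈ c, s ⊆ ub := by
    rintro c hcS hchain ⟨F₀, hF₀⟩
    refine ⟨⋃₀ c, ⟨⟨?_, ?_, ?_, ?_, ?_⟩, ?_⟩, fun s hs => Set.subset_sUnion_of_mem hs⟩
    · rintro A ⟨F₁, hF₁, hA⟩; exact (hcS hF₁).1.1 hA
    · obtain ⟨A, hA⟩ := (hcS hF₀).1.2.1; exact ⟨A, F₀, hF₀, hA⟩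
    · rintro A ⟨F₁, hF₁, hA⟩; exact (hcS hF₁).1.2.2.1 A hA
    · rintro A ⟨F₁, hF₁, hA⟩ B ⟨F₂, hF₂, hB⟩
      rcases hchain.total hF₁ hF₂ with h | h
      · exact ⟨F₂, hF₂, (hcS hF₂).1.2.2.2.1 A (h hA) B hB⟩
      · exact ⟨F₁, hF₁, (hcS hF₁).1.2.2.2.1 A hA B (h hB)⟩
    · rintro A ⟨F₁, hF₁, hA⟩ B hB hAB
      exact ⟨F₁, hF₁, (hcS hF₁).1.2.2.2.2 A hA B hB hAB⟩
    · exact (hcS hF₀).2.trans (Set.subset_sUnion_of_mem hF₀)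
  obtain ⟨M, hFM, hMS⟩ := zorn_subset_nonempty _ hchainub F ⟨hF, subset_rfl⟩
  exact ⟨M, ⟨hMS.1.1, fun F' hF' hMF' =>
    Set.Subset.antisymm (hMS.2 ⟨hF', hFM.trans hMF'⟩ hMF') hMF'⟩, hFM⟩

end WallmanAux

open WallmanAux in

/-- For a weakly normal gts with locally compact Hausdorff non-compact
topologization: `C₀` is a Wallman base of `X_top`, every filter in `C₀` extends
to an ultrafilter in `C₀`, and the Wallman space `W(X, C₀)` is compact. -/
theorem stmt_17 {X : Type u} (G : GenTop X) (hwn : G.WeaklyNormal)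
    (hlc : @LocallyCompactSpace X G.topol) (h2 : @T2Space X G.topol)
    (hnc : ¬ @CompactSpace X G.topol) :
    @IsWallmanBase X G.topol (C0 G) ∧
    (∀ F : Set (Set X), IsCFilter (C0 G) F →
      ∃ M : Set (Set X), IsCUltrafilter (C0 G) M ∧ F ⊆ M) ∧
    @CompactSpace (WallmanPoint (C0 G)) (wallmanTop (C0 G)) := by
  letI := G.topol
  haveI := hlc
  haveI := h2
  have base1 : ∀ A ∈ C0 G, IsClosed A := fun A hA => isClosed_closeds G hA.1
  have base2 : ∀ A : Set X, IsClosed A → ∀ x ∉ A, ∃ B ∈ C0 G, x ∉ B ∧ A ⊆ B := by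
    intro A hA x hx
    obtain ⟨v, hv, K, hK, hxv, hvK, hKA⟩ := key G hlc hA.isOpen_compl hx
    refine ⟨vᶜ, ⟨compl_opens_closeds G hv, Or.inr fun B hB hBs => ?_⟩,
      fun h => h hxv, fun a ha hav => (hKA (hvK hav)) ha⟩
    rw [compl_compl] at hBs
    exact hK.of_isClosed_subset (isClosed_closeds G hB) (hBs.trans hvK)
  have disj : ∀ A : Set X, ((∃ x, A = {x}) ∨ IsClosed A) → ∀ x ∉ A,
      ∃ B ∈ C0 G, x ∈ B ∧ B ⊆ Aᶜ := by
    intro A hA x hx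
    have hAc : IsClosed A := by
      rcases hA with ⟨y, rfl⟩ | h
      exacts [isClosed_singleton, h]
    obtain ⟨v, hv, K, hK, hxv, hvK, hKA⟩ := key G hlc hAc.isOpen_compl hx
    obtain ⟨W₁, hW₁, W₂, hW₂, hd, hxW, hvcW⟩ := hwn {x} vᶜ (Or.inl ⟨x, rfl⟩)
      (Or.inr (compl_opens_closeds G hv))
      (by rw [Set.disjoint_left]; rintro y rfl hy; exact hy hxv)
    have hBv : W₂ᶜ ⊆ v := by intro a ha; by_contra h; exact ha (hvcW h)
    have hBK : W₂ᶜ ⊆ K := hBv.trans hvK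
    refine ⟨W₂ᶜ, ⟨compl_opens_closeds G hW₂, Or.inl (hK.of_isClosed_subset
      (isClosed_closeds G (compl_opens_closeds G hW₂)) hBK)⟩,
      fun h => Set.disjoint_left.mp hd (hxW rfl) h, hBK.trans hKA⟩
  have screening : ∀ A₁ ∈ C0 G, ∀ A₂ ∈ C0 G, Disjoint A₁ A₂ →
      ∃ C₁ ∈ C0 G, ∃ C₂ ∈ C0 G, C₁ ∪ C₂ = Set.univ ∧ A₁ ∩ C₁ = ∅ ∧ A₂ ∩ C₂ = ∅ := by
    intro A₁ h₁ A₂ h₂ hd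
    obtain ⟨V₁, hV₁, V₂, hV₂, hdV, hA₁V, hA₂V⟩ := hwn A₁ A₂ (Or.inr h₁.1) (Or.inr h₂.1) hd
    obtain ⟨W₁, hW₁, hAW₁, hWV₁, hc₁⟩ := screenHalf G hlc h₁ hV₁ hA₁V
    obtain ⟨W₂, hW₂, hAW₂, hWV₂, hc₂⟩ := screenHalf G hlc h₂ hV₂ hA₂V
    refine ⟨W₁ᶜ, hc₁, W₂ᶜ, hc₂, ?_, ?_, ?_⟩
    · have hWW : W₁ ∩ W₂ = ∅ := Set.subset_empty_iff.mp
        (fun x hxm => Set.disjoint_left.mp hdV (hWV₁ hxm.1) (hWV₂ hxm.2))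
      rw [← Set.compl_inter, hWW, Set.compl_empty]
    · exact Set.eq_empty_iff_forall_notMem.mpr (fun x hxm => hxm.2 (hAW₁ hxm.1))
    · exact Set.eq_empty_iff_forall_notMem.mpr (fun x hxm => hxm.2 (hAW₂ hxm.1))
  refine ⟨⟨⟨base1, base2⟩, fun A hA B hB => c0_union G hA hB,
    fun A hA B hB => c0_inter G hwn hA hB, disj, screening⟩,
    fun F hF => extend_filter hF, ?_⟩
  letI tw := wallmanTop (C0 G)
  constructor
  rw [isCompact_iff_ultrafilter_le_nhds]
  intro f _
  have hUnivMem : ∀ p : WallmanPoint (C0 G), Set.univ ∈ p.1 := by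
    intro p
    obtain ⟨A, hA⟩ := p.2.1.2.1
    exact p.2.1.2.2.2.2 A hA Set.univ (univ_mem_C0 G) (Set.subset_univ A)
  set S : Set (Set X) := {A ∈ C0 G | {p : WallmanPoint (C0 G) | A ∈ p.1} ∈ f} with hSdef
  have hSF : IsCFilter (C0 G) S := by
    refine ⟨fun A hA => hA.1, ⟨Set.univ, univ_mem_C0 G, ?_⟩, fun A hA => ?_, ?_, ?_⟩
    · have huniv : {p : WallmanPoint (C0 G) | Set.univ ∈ p.1} = Set.univ := by
        ext p; simp [hUnivMem p]
      rw [huniv]; exact Filter.univ_mem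
    · obtain ⟨p, hp⟩ := Ultrafilter.nonempty_of_mem hA.2
      exact p.2.1.2.2.1 A hp
    · intro A hA B hB
      refine ⟨c0_inter G hwn hA.1 hB.1, ?_⟩
      exact Filter.mem_of_superset (Filter.inter_mem hA.2 hB.2)
        (fun p hp => p.2.1.2.2.2.1 A hp.1 B hp.2)
    · intro A hA B hB hAB
      exact ⟨hB, Filter.mem_of_superset hA.2 (fun p hp => p.2.1.2.2.2.2 A hp B hB hAB)⟩
  obtain ⟨M, hM, hSM⟩ := extend_filter hSF
  refine ⟨⟨M, hM⟩, Set.mem_univ _, ?_⟩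
  show ↑f ≤ @nhds _ (TopologicalSpace.generateFrom
    {V : Set (WallmanPoint (C0 G)) | ∃ A ∈ C0 G, V = {p : WallmanPoint (C0 G) | A ∈ p.1}ᶜ}) ⟨M, hM⟩
  refine le_of_le_of_eq ?_ TopologicalSpace.nhds_generateFrom.symm
  refine le_iInf₂ fun s hs => ?_
  rw [Filter.le_principal_iff]
  obtain ⟨hps, A, hAC, rfl⟩ := hs
  by_contra hsf
  have hcm := (Ultrafilter.compl_mem_iff_notMem).mpr hsf
  rw [compl_compl] at hcm
  exact hps (hSM ⟨hAC, hcm⟩)
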